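/- Let r₁ > 0 and let A, B : ℕ → ℂ satisfy Σ_{j=0}^∞ (|A_j| + |B_j|) r₁^{−j} < ∞; define Σ₀(z) = Σ_{j=0}^∞ A_j z^{−j} and Σ₁(z) = Σ_{j=0}^∞ B_j z^{−j} for |z| ≥ r₁. Let Ω = {z ∈ ℂ : Im z < 0 or Re z > 0} and let h₀, h₁ : Ω → ℂ be holomorphic. Assume: (i) h₀(r)Σ₀(r) + h₁(r)Σ₁(r) = 0 for every real r ≥ r₁; (ii) there is a sequence (z_n) in Ω with |z_n| → ∞, h₀(z_n) = 0, and h₁(z_n) ≠ 0 for every n; (iii) h₀(r) ≠ 0 for every real r ≥ r₁. Then A_j = 0 and B_j = 0 for every j ∈ ℕ. -/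

import Mathlib

open Complex Filter Topology

noncomputable section

private lemma karp_summable_shift (r₁ : ℝ) (hr₁ : 0 < r₁) (C : ℕ → ℂ)
    (hsum : Summable fun j : ℕ => ‖C j‖ / r₁ ^ j) (j : ℕ) :
    Summable fun k : ℕ => ‖C (k + j)‖ / r₁ ^ k := by
  have h1 : Summable fun k : ℕ => ‖C (k + j)‖ / r₁ ^ (k + j) :=
    (summable_nat_add_iff (f := fun j : ℕ => ‖C j‖ / r₁ ^ j) j).2 hsum
  refine (h1.mul_right (r₁ ^ j)).congr fun k => ?_
  rw [pow_add, ← div_div, div_mul_cancel₀ _ (pow_ne_zero j hr₁.ne')]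

private lemma karp_aux_coeffs_zero (r₁ : ℝ) (hr₁ : 0 < r₁) (C : ℕ → ℂ)
    (hsum : Summable fun j : ℕ => ‖C j‖ / r₁ ^ j)
    (w : ℕ → ℂ) (hw : ∀ n, r₁ ≤ ‖w n‖)
    (hw' : Tendsto (fun n => ‖w n‖) atTop atTop)
    (hz : ∀ n, ∑' j : ℕ, C j / (w n) ^ j = 0) :
    ∀ j, C j = 0 := by
  intro j
  induction j using Nat.strong_induction_on with
  | _ j ih =>
  have hD : Summable fun k : ℕ => ‖C (k + 1 + j)‖ / r₁ ^ k := by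
    refine (karp_summable_shift r₁ hr₁ C hsum (j + 1)).congr fun k => ?_
    rw [show k + (j + 1) = k + 1 + j by omega]
  set D : ℝ := ∑' k : ℕ, ‖C (k + 1 + j)‖ / r₁ ^ k with hDdef
  have hbound : ∀ n, ‖C j‖ ≤ D / ‖w n‖ := by
    intro n
    have hwn : (0 : ℝ) < ‖w n‖ := lt_of_lt_of_le hr₁ (hw n)
    have hw0 : w n ≠ 0 := by
      intro h; rw [h] at hwn; simp at hwn
    have hsw : ∀ m : ℕ, Summable fun k : ℕ => C (k + m) / (w n) ^ k := by
      intro m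
      apply Summable.of_norm_bounded (karp_summable_shift r₁ hr₁ C hsum m)
      intro k
      rw [norm_div, norm_pow]
      gcongr
      exact hw n
      
    have step1 : ∑' k : ℕ, C (k + j) / (w n) ^ (k + j) = 0 := by
      have hs : Summable fun k : ℕ => C k / (w n) ^ k := by simpa using hsw 0
      have h2 := Summable.sum_add_tsum_nat_add (f := fun k : ℕ => C k / (w n) ^ k) j hs
      have hfin : (∑ i ∈ Finset.range j, C i / (w n) ^ i) = 0 := by
        apply Finset.sum_eq_zero
        intro i hi
        rw [ih i (Finset.mem_range.1 hi)]
        simp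
      rw [hfin, zero_add, hz n] at h2
      exact h2
    have step2 : ∑' k : ℕ, C (k + j) / (w n) ^ k = 0 := by
      have hterm : ∀ k : ℕ, C (k + j) / (w n) ^ k = (w n) ^ j * (C (k + j) / (w n) ^ (k + j)) := by
        intro k
        rw [pow_add, ← div_div, mul_comm, div_mul_cancel₀ _ (pow_ne_zero j hw0)]
      rw [tsum_congr hterm, tsum_mul_left, step1, mul_zero]
    have h3 := Summable.tsum_eq_zero_add (hsw j)
    rw [step2] at h3
    simp only [Nat.zero_add, pow_zero, div_one] at h3
    have step3 : C j = -∑' k : ℕ, C (k + 1 + j) / (w n) ^ (k + 1) :=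
      eq_neg_of_add_eq_zero_left h3.symm
    have hle : ∀ k : ℕ, ‖C (k + 1 + j) / (w n) ^ (k + 1)‖ ≤
        ‖C (k + 1 + j)‖ / r₁ ^ k * (‖w n‖)⁻¹ := by
      intro k
      rw [norm_div, norm_pow,
        ← div_eq_mul_inv, div_div, pow_succ]
      gcongr
      exact hw n
    have key : ‖∑' k : ℕ, C (k + 1 + j) / (w n) ^ (k + 1)‖ ≤ D * (‖w n‖)⁻¹ :=
      tsum_of_norm_bounded (hD.hasSum.mul_right _) hle
    calc ‖C j‖ = ‖-∑' k : ℕ, C (k + 1 + j) / (w n) ^ (k + 1)‖ := by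
          rw [← step3]
      _ = ‖∑' k : ℕ, C (k + 1 + j) / (w n) ^ (k + 1)‖ := norm_neg _
      _ ≤ D * (‖w n‖)⁻¹ := key
      _ = D / ‖w n‖ := (div_eq_mul_inv _ _).symm
  have hDiv : Tendsto (fun n => D / ‖w n‖) atTop (𝓝 0) :=
    tendsto_const_nhds.div_atTop hw'
  have h0 : ‖C j‖ ≤ 0 := ge_of_tendsto' hDiv hbound
  exact norm_eq_zero.1 (le_antisymm h0 (norm_nonneg _))

private lemma karp_diffOn_tsum (r₁ : ℝ) (hr₁ : 0 < r₁) (C : ℕ → ℂ)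
    (hsum : Summable fun j : ℕ => ‖C j‖ / r₁ ^ j) :
    DifferentiableOn ℂ (fun z : ℂ => ∑' j : ℕ, C j / z ^ j)
      {z : ℂ | r₁ < ‖z‖} := by
  have hopen : IsOpen {z : ℂ | r₁ < ‖z‖} :=
    isOpen_lt continuous_const continuous_norm
  have h1 : TendstoUniformlyOn (fun (t : Finset ℕ) (z : ℂ) => ∑ j ∈ t, C j / z ^ j)
      (fun z : ℂ => ∑' j : ℕ, C j / z ^ j) atTop {z : ℂ | r₁ < ‖z‖} := by
    apply tendstoUniformlyOn_tsum hsum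
    intro j z hz
    rw [norm_div, norm_pow]
    gcongr
    exact le_of_lt hz
  apply h1.tendstoLocallyUniformlyOn.differentiableOn ?_ hopen
  · filter_upwards with t
    apply DifferentiableOn.fun_sum
    intro j _
    apply DifferentiableOn.div (differentiableOn_const _)
    · exact (differentiable_pow j).differentiableOn
    · intro z hz
      have : z ≠ 0 := by
        intro h
        rw [h] at hz
        simp only [Set.mem_setOf_eq, norm_zero] at hz
        exact absurd hz (not_lt.2 hr₁.le)
      exact pow_ne_zero _ this

private lemma karp_preconnected (r₁ : ℝ) (hr₁ : 0 < r₁) :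
    IsPreconnected {z : ℂ | (z.im < 0 ∨ 0 < z.re) ∧ r₁ < ‖z‖} := by
  have himage : {z : ℂ | (z.im < 0 ∨ 0 < z.re) ∧ r₁ < ‖z‖} =
      (fun p : ℝ × ℝ => (p.1 : ℂ) * Complex.exp (p.2 * I)) ''
        (Set.Ioi r₁ ×ˢ Set.Ioo (-Real.pi) (Real.pi / 2)) := by
    ext z
    constructor
    · rintro ⟨h1, h2⟩
      have hz0 : z ≠ 0 := by
        intro h
        rw [h] at h2
        simp only [norm_zero] at h2
        exact absurd h2 (not_lt.2 hr₁.le)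
      refine ⟨(‖z‖, Complex.arg z), ⟨h2, Complex.neg_pi_lt_arg z, ?_⟩, ?_⟩
      · rcases h1 with him | hre
        · calc Complex.arg z < 0 := Complex.arg_neg_iff.2 him
            _ < Real.pi / 2 := by positivity
        · have := Complex.abs_arg_lt_pi_div_two_iff.2 (Or.inl hre)
          exact lt_of_le_of_lt (le_abs_self _) this
      · exact Complex.norm_mul_exp_arg_mul_I z
    · rintro ⟨⟨r, θ⟩, ⟨hr, hθ1, hθ2⟩, rfl⟩
      have hr0 : (0 : ℝ) < r := lt_trans hr₁ hr
      have habs : ‖(r : ℂ) * Complex.exp (θ * I)‖ = r := by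
        rw [norm_mul, Complex.norm_exp_ofReal_mul_I, mul_one, Complex.norm_real, Real.norm_eq_abs,
          abs_of_pos hr0]
      constructor
      · rcases lt_or_ge θ 0 with hneg | hpos
        · left
          have : ((r : ℂ) * Complex.exp (θ * I)).im = r * Real.sin θ := by
            simp [Complex.mul_im, Complex.exp_ofReal_mul_I_re, Complex.exp_ofReal_mul_I_im]
          rw [this]
          have hsin : Real.sin θ < 0 := Real.sin_neg_of_neg_of_neg_pi_lt hneg hθ1
          exact mul_neg_of_pos_of_neg hr0 hsin
        · right
          have : ((r : ℂ) * Complex.exp (θ * I)).re = r * Real.cos θ := by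
            simp [Complex.mul_re, Complex.exp_ofReal_mul_I_re, Complex.exp_ofReal_mul_I_im]
          rw [this]
          have hcos : 0 < Real.cos θ := Real.cos_pos_of_mem_Ioo
            ⟨lt_of_lt_of_le (by linarith [Real.pi_pos]) hpos, hθ2⟩
          exact mul_pos hr0 hcos
      · rw [habs]; exact hr
  rw [himage]
  apply IsPreconnected.image
  · exact ((convex_Ioi r₁).prod (convex_Ioo _ _)).isPreconnected
  · apply Continuous.continuousOn
    fun_prop

/-- Lemma 1 (abstract form): if `h₀ Σ₀ + h₁ Σ₁ = 0` on `[r₁, ∞)` for absolutely convergent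
inverse-power series `Σ₀, Σ₁`, where `h₀, h₁` are holomorphic on
`Ω = {Im z < 0 or Re z > 0}`, `h₀` has a sequence of zeros in `Ω` going to infinity at which
`h₁` does not vanish, and `h₀` does not vanish on `[r₁, ∞)`, then all coefficients vanish. -/
theorem karp_uniqueness_abstract
    (r₁ : ℝ) (hr₁ : 0 < r₁) (A B : ℕ → ℂ)
    (hsum : Summable fun j : ℕ => (‖A j‖ + ‖B j‖) / r₁ ^ j)
    (h₀ h₁ : ℂ → ℂ)
    (hΩ₀ : DifferentiableOn ℂ h₀ {z : ℂ | z.im < 0 ∨ 0 < z.re})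
    (hΩ₁ : DifferentiableOn ℂ h₁ {z : ℂ | z.im < 0 ∨ 0 < z.re})
    (hvanish : ∀ r : ℝ, r₁ ≤ r →
      h₀ r * (∑' j : ℕ, A j / (r : ℂ) ^ j) + h₁ r * (∑' j : ℕ, B j / (r : ℂ) ^ j) = 0)
    (hzeros : ∃ z : ℕ → ℂ,
      (∀ n, z n ∈ {w : ℂ | w.im < 0 ∨ 0 < w.re} ∧ h₀ (z n) = 0 ∧ h₁ (z n) ≠ 0) ∧
      Tendsto (fun n => ‖z n‖) atTop atTop)
    (hnonzero : ∀ r : ℝ, r₁ ≤ r → h₀ (r : ℂ) ≠ 0) :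
    ∀ j : ℕ, A j = 0 ∧ B j = 0 := by
  obtain ⟨z, hzprop, hztend⟩ := hzeros
  have hA : Summable fun j : ℕ => ‖A j‖ / r₁ ^ j := by
    refine Summable.of_nonneg_of_le (fun j => by positivity) (fun j => ?_) hsum
    gcongr
    exact le_add_of_nonneg_right (norm_nonneg _)
  have hB : Summable fun j : ℕ => ‖B j‖ / r₁ ^ j := by
    refine Summable.of_nonneg_of_le (fun j => by positivity) (fun j => ?_) hsum
    gcongr
    exact le_add_of_nonneg_left (norm_nonneg _)
  set U : Set ℂ := {w : ℂ | (w.im < 0 ∨ 0 < w.re) ∧ r₁ < ‖w‖} with hUdef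
  have hUopen : IsOpen U := by
    have : U = ({w : ℂ | w.im < 0} ∪ {w : ℂ | 0 < w.re}) ∩ {w : ℂ | r₁ < ‖w‖} := by
      ext w; simp [hUdef, Set.mem_union, Set.mem_inter_iff]
    rw [this]
    exact (IsOpen.union (isOpen_lt Complex.continuous_im continuous_const)
      (isOpen_lt continuous_const Complex.continuous_re)).inter
      (isOpen_lt continuous_const continuous_norm)
  have hUsub1 : U ⊆ {w : ℂ | w.im < 0 ∨ 0 < w.re} := fun w hw => hw.1
  have hUsub2 : U ⊆ {w : ℂ | r₁ < ‖w‖} := fun w hw => hw.2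
  set f : ℂ → ℂ := fun w =>
    h₀ w * (∑' j : ℕ, A j / w ^ j) + h₁ w * (∑' j : ℕ, B j / w ^ j) with hfdef
  have hfd : DifferentiableOn ℂ f U :=
    ((hΩ₀.mono hUsub1).mul ((karp_diffOn_tsum r₁ hr₁ A hA).mono hUsub2)).add
      ((hΩ₁.mono hUsub1).mul ((karp_diffOn_tsum r₁ hr₁ B hB).mono hUsub2))
  have hfa : AnalyticOnNhd ℂ f U := hfd.analyticOnNhd hUopen
  have hz₀U : ((2 * r₁ : ℝ) : ℂ) ∈ U := by
    constructor
    · right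
      simp only [Complex.ofReal_re]
      linarith
    · rw [Complex.norm_real, Real.norm_eq_abs, abs_of_pos (by linarith)]
      linarith
  have hfreq : ∃ᶠ w in 𝓝[≠] ((2 * r₁ : ℝ) : ℂ), f w = 0 := by
    have hseq : Tendsto (fun n : ℕ => ((2 * r₁ + 1 / (n + 1) : ℝ) : ℂ)) atTop
        (𝓝[≠] ((2 * r₁ : ℝ) : ℂ)) := by
      apply tendsto_nhdsWithin_of_tendsto_nhds_of_eventually_within
      · have hre : Tendsto (fun n : ℕ => (2 * r₁ + 1 / (n + 1) : ℝ)) atTop (𝓝 (2 * r₁)) := by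
          have h1 : Tendsto (fun n : ℕ => (1 / (n + 1) : ℝ)) atTop (𝓝 0) :=
            tendsto_one_div_add_atTop_nhds_zero_nat
          simpa using tendsto_const_nhds.add h1
        exact (Complex.continuous_ofReal.tendsto _).comp hre
      · filter_upwards with n
        simp only [Set.mem_compl_iff, Set.mem_singleton_iff]
        intro h
        have h' : (2 * r₁ + 1 / (n + 1) : ℝ) = 2 * r₁ := Complex.ofReal_injective h
        have : (0 : ℝ) < 1 / ((n : ℝ) + 1) := by positivity
        linarith
    apply hseq.frequently
    apply Frequently.of_forall
    intro n
    have : (0 : ℝ) < 1 / ((n : ℝ) + 1) := by positivity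
    exact hvanish _ (by linarith)
  have hEq : Set.EqOn f 0 U :=
    hfa.eqOn_zero_of_preconnected_of_frequently_eq_zero (karp_preconnected r₁ hr₁) hz₀U hfreq
  obtain ⟨N, hN⟩ := eventually_atTop.1 (hztend.eventually_gt_atTop r₁)
  have hBz : ∀ j, B j = 0 := by
    apply karp_aux_coeffs_zero r₁ hr₁ B hB (fun n => z (n + N))
    · intro n
      exact le_of_lt (hN _ (Nat.le_add_left N n))
    · exact hztend.comp (tendsto_add_atTop_nat N)
    · intro n
      have hmem : z (n + N) ∈ U := ⟨(hzprop (n + N)).1, hN _ (Nat.le_add_left N n)⟩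
      have hf0 : f (z (n + N)) = 0 := hEq hmem
      rw [hfdef] at hf0
      simp only [(hzprop (n + N)).2.1, zero_mul, zero_add] at hf0
      exact (mul_eq_zero.1 hf0).resolve_left (hzprop (n + N)).2.2
  have hAz : ∀ j, A j = 0 := by
    apply karp_aux_coeffs_zero r₁ hr₁ A hA (fun n : ℕ => ((r₁ + n : ℝ) : ℂ))
    · intro n
      rw [Complex.norm_real, Real.norm_eq_abs, abs_of_pos (by positivity)]
      have : (0 : ℝ) ≤ n := Nat.cast_nonneg n
      linarith
    · have h1 : Tendsto (fun n : ℕ => r₁ + (n : ℝ)) atTop atTop :=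
        tendsto_atTop_add_const_left _ _ tendsto_natCast_atTop_atTop
      apply h1.congr
      intro n
      rw [Complex.norm_real, Real.norm_eq_abs, abs_of_pos (by positivity)]
    · intro n
      have hr : r₁ ≤ r₁ + n := by
        have : (0 : ℝ) ≤ n := Nat.cast_nonneg n
        linarith
      have hv := hvanish (r₁ + n) hr
      have hBzero : (∑' j : ℕ, B j / ((r₁ + n : ℝ) : ℂ) ^ j) = 0 := by
        simp [hBz]
      rw [hBzero, mul_zero, add_zero] at hv
      exact (mul_eq_zero.1 hv).resolve_left (hnonzero _ hr)
  exact fun j => ⟨hAz j, hBz j⟩
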